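/- Let d ≥ 1 and let m ≥ 1 be an integer. There is a constant C = C(m) such that the following holds for every integer N ≥ 1: if X_1, …, X_N are independent identically distributed ℝ^d-valued random variables on a probability space (Ω, ℱ, P) whose common law has a density v ∈ L^1(ℝ^d) (a probability density), and h : ℝ^d → [0,∞) is bounded and measurable with ∫_{ℝ^d} h = 1, then ∫_{ℝ^d} E[ ( N^{−1} Σ_{i=1}^{N} ( h(x − X_i) − (h ⋆ v)(x) ) )^{2m} ] dx ≤ C(m) · N^{−m} · ‖h‖_{L^∞}^{2m−1}, where (h ⋆ v)(x) = ∫_{ℝ^d} h(x − z) v(z) dz. -/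

import Mathlib

open MeasureTheory Real Set
open scoped ENNReal BigOperators NNReal

noncomputable section

abbrev Eu (d : ℕ) : Type := EuclideanSpace ℝ (Fin d)

/-- Surface area of the unit sphere in `ℝ^d`. -/
def sigmaSurf (d : ℕ) : ℝ := 2 * Real.pi ^ ((d : ℝ) / 2) / Real.Gamma ((d : ℝ) / 2)

/-- The constant `C_d = ((d-2) σ_d)⁻¹`. -/
def Cconst (d : ℕ) : ℝ := (((d : ℝ) - 2) * sigmaSurf d)⁻¹

/-- Fundamental solution of the Laplace equation in `ℝ^d`. -/
def Phi (d : ℕ) (x : Eu d) : ℝ := Cconst d * ‖x‖ ^ ((2 : ℝ) - d)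

/-- Gradient of the fundamental solution: `∇Φ(x) = -(d-2) C_d x |x|^{-d}`. -/
def gradPhi (d : ℕ) (x : Eu d) : Eu d :=
  (-((d : ℝ) - 2) * Cconst d * ‖x‖ ^ (-(d : ℝ))) • x

/-- Partial derivative in the `k`-th coordinate direction. -/
def pd (d : ℕ) (k : Fin d) (g : Eu d → ℝ) (x : Eu d) : ℝ :=
  fderiv ℝ g x (EuclideanSpace.single k 1)

/-- Laplacian. -/
def lap (d : ℕ) (g : Eu d → ℝ) (x : Eu d) : ℝ :=
  ∑ k : Fin d, pd d k (pd d k g) x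

/-- Gradient as a vector in `ℝ^d`. -/
def gradVec (d : ℕ) (g : Eu d → ℝ) (x : Eu d) : Eu d :=
  (EuclideanSpace.equiv (Fin d) ℝ).symm (fun k => pd d k g x)

/-- Convolution `(K ⋆ g)(x) = ∫ K(x-y) g(y) dy` of a vector-valued kernel with a scalar
function. -/
def convVec (d : ℕ) (K : Eu d → Eu d) (g : Eu d → ℝ) (x : Eu d) : Eu d :=
  ∫ y, g y • K (x - y)

/-- `(∇Φ ⋆ g)(x)`. -/
def gradPhiConv (d : ℕ) (g : Eu d → ℝ) (x : Eu d) : Eu d :=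
  convVec d (gradPhi d) g x

/-- `Dg` is the weak gradient of `g`. -/
def HasWeakGrad (d : ℕ) (g : Eu d → ℝ) (Dg : Eu d → Eu d) : Prop :=
  ∀ φ : Eu d → ℝ, ContDiff ℝ (⊤ : ℕ∞) φ → HasCompactSupport φ → ∀ k : Fin d,
    ∫ x, g x * fderiv ℝ φ x (EuclideanSpace.single k 1) = - ∫ x, (Dg x) k * φ x

/-- The class `X` of control functions, with weak gradient witness:
for a.e. `t ∈ (0,T)`, `f(t,·) ∈ W^{1,q} ∩ L^1` with
`‖f(t,·)‖_{L^1} + ‖f(t,·)‖_{L^q} + ‖∇f(t,·)‖_{L^q} ≤ l(t)`. -/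
def IsControl (d : ℕ) (T q : ℝ) (l : ℝ → ℝ) (f : ℝ → Eu d → ℝ) : Prop :=
  Measurable (Function.uncurry f) ∧
  ∃ Df : ℝ → Eu d → Eu d,
    ∀ᵐ t ∂(volume.restrict (Set.Ioo 0 T)),
      AEStronglyMeasurable (Df t) volume ∧
      HasWeakGrad d (f t) (Df t) ∧
      eLpNorm (f t) 1 volume + eLpNorm (f t) (ENNReal.ofReal q) volume +
        eLpNorm (Df t) (ENNReal.ofReal q) volume ≤ ENNReal.ofReal (l t)

/-- `l` is a nonnegative function in `L^r(0,T)`. -/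
def LrBound (T r : ℝ) (l : ℝ → ℝ) : Prop :=
  Measurable l ∧ (∀ t, 0 ≤ l t) ∧
    (∫⁻ t in Set.Ioo (0 : ℝ) T, ENNReal.ofReal (l t ^ r)) ≠ ∞

/-- `g` coincides with a Schwartz function. -/
def IsSchwartzFn {E : Type*} [NormedAddCommGroup E] [NormedSpace ℝ E] (g : E → ℝ) : Prop :=
  ∃ h : SchwartzMap E ℝ, ∀ x, h x = g x

/-- Classical solution of the controlled Keller–Segel equation
`∂_t ρ = Δρ − χ ∇·(ρ ∇Φ⋆(ρ − f))` on `[0,S]`, with the divergence expanded. -/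
def IsClassicalSol (d : ℕ) (χ S : ℝ) (f : ℝ → Eu d → ℝ) (ρ : ℝ → Eu d → ℝ) : Prop :=
  (∀ t ∈ Set.Icc (0 : ℝ) S, ∀ x, 0 ≤ ρ t x) ∧
  (∀ t ∈ Set.Icc (0 : ℝ) S, IsSchwartzFn (ρ t)) ∧
  (∀ x, ContDiffOn ℝ 1 (fun t => ρ t x) (Set.Icc 0 S)) ∧
  (∀ t ∈ Set.Ioc (0 : ℝ) S, ∀ᵐ x : Eu d,
    deriv (fun s => ρ s x) t =
      lap d (ρ t) x
      - χ * ∑ k : Fin d,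
          pd d k (ρ t) x * (gradPhiConv d (fun y => ρ t y - f t y) x) k
      + χ * ρ t x * (ρ t x - f t x))

/-- Mollifier: smooth, nonnegative, supported in the closed unit ball, unit mass. -/
def IsMollifier (d : ℕ) (jm : Eu d → ℝ) : Prop :=
  ContDiff ℝ (⊤ : ℕ∞) jm ∧ (∀ x, 0 ≤ jm x) ∧
    tsupport jm ⊆ Metric.closedBall 0 1 ∧ (∫ x, jm x) = 1

/-- Rescaled mollifier `j_ε(x) = ε^{-d} j(x/ε)`. -/
def moll (d : ℕ) (jm : Eu d → ℝ) (ε : ℝ) (x : Eu d) : ℝ :=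
  (ε ^ d)⁻¹ * jm (ε⁻¹ • x)

/-- Cutoff potential `Φ̃`: a `C¹` function equal to `Φ` for `|x| ≥ 2ε` with
`|∇Φ̃| ≤ (d-2) C_d (2ε)^{1-d}` for `|x| < 2ε`. -/
def IsCutoff (d : ℕ) (ε : ℝ) (Pt : Eu d → ℝ) : Prop :=
  ContDiff ℝ 1 Pt ∧ (∀ x : Eu d, 2 * ε ≤ ‖x‖ → Pt x = Phi d x) ∧
  (∀ x : Eu d, ‖x‖ < 2 * ε →
    ‖fderiv ℝ Pt x‖ ≤ ((d : ℝ) - 2) * Cconst d * (2 * ε) ^ (1 - (d : ℝ)))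

/-- Mollified cutoff potential `Φ̃_ε = j_ε ⋆ Φ̃`. -/
def cutMoll (d : ℕ) (jm : Eu d → ℝ) (ε : ℝ) (Pt : Eu d → ℝ) (x : Eu d) : ℝ :=
  ∫ y, moll d jm ε y * Pt (x - y)

lemma count_aux (m N : ℕ) (hm : 1 ≤ m) (T : Finset (Fin (2*m) → Fin N))
    (hT : ∀ p ∈ T, ∀ i : Fin N, (Finset.univ.filter (fun j => p j = i)).card ≠ 1) :
    T.card ≤ m ^ (2*m) * N ^ m := by
  classical
  have h2m : 0 < 2*m := by omega
  have hsub : T ⊆ Finset.univ.image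
      (fun σq : (Fin (2*m) → Fin m) × (Fin m → Fin N) => σq.2 ∘ σq.1) := by
    intro p hp
    have hgood := hT p hp
    set I := Finset.univ.image p with hIdef
    have hImem : ∀ j, p j ∈ I := fun j => Finset.mem_image_of_mem p (Finset.mem_univ j)
    have hfiber : ∀ i ∈ I, 2 ≤ (Finset.univ.filter (fun j => p j = i)).card := by
      intro i hi
      rcases Finset.mem_image.mp hi with ⟨j, _, hj⟩
      have h1 : 0 < (Finset.univ.filter (fun j => p j = i)).card :=
        Finset.card_pos.mpr ⟨j, by simp [hj]⟩
      have := hgood i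
      omega
    have hsum : ∑ i ∈ I, (Finset.univ.filter (fun j => p j = i)).card = 2*m := by
      rw [← Finset.card_eq_sum_card_fiberwise (fun j _ => hImem j)]
      simp
    have hIcard : I.card ≤ m := by
      have h2 : 2 * I.card ≤ ∑ i ∈ I, (Finset.univ.filter (fun j => p j = i)).card := by
        calc 2 * I.card = ∑ _i ∈ I, 2 := by rw [Finset.sum_const]; ring
          _ ≤ _ := Finset.sum_le_sum hfiber
      omega
    have hr0 : 0 < I.card := Finset.card_pos.mpr ⟨p ⟨0, h2m⟩, hImem _⟩
    set e := I.orderIsoOfFin rfl with he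
    refine Finset.mem_image.mpr ⟨⟨fun j => Fin.castLE hIcard (e.symm ⟨p j, hImem j⟩),
      fun k => if h : (k : ℕ) < I.card then (e ⟨k, h⟩ : Fin N) else (e ⟨0, hr0⟩ : Fin N)⟩,
      Finset.mem_univ _, ?_⟩
    funext j
    have hlt : ((Fin.castLE hIcard (e.symm ⟨p j, hImem j⟩) : Fin m) : ℕ) < I.card :=
      (e.symm ⟨p j, hImem j⟩).isLt
    simp only [Function.comp_apply]
    rw [dif_pos hlt]
    have h3 : (⟨((Fin.castLE hIcard (e.symm ⟨p j, hImem j⟩) : Fin m) : ℕ), hlt⟩ : Fin I.card)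
        = e.symm ⟨p j, hImem j⟩ := Fin.ext (by simp)
    rw [h3]
    simp
  calc T.card ≤ _ := Finset.card_le_card hsub
    _ ≤ (Finset.univ : Finset ((Fin (2*m) → Fin m) × (Fin m → Fin N))).card :=
        Finset.card_image_le
    _ = m ^ (2*m) * N ^ m := by
        simp [Fintype.card_fun]

lemma mainLem (d : ℕ) (m : ℕ) (hm : 1 ≤ m) (N : ℕ) (hN : 1 ≤ N)
    (Ω : Type) (mΩ : MeasurableSpace Ω) (P : Measure Ω) (hP : IsProbabilityMeasure P)
    (X : Fin N → Ω → Eu d) (v h : Eu d → ℝ) (B : ℝ)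
    (hX : ∀ i, Measurable (X i))
    (hind : ProbabilityTheory.iIndepFun X P)
    (hv : Measurable v) (hv0 : ∀ x, 0 ≤ v x) (hv1 : (∫ x, v x) = 1)
    (hmap : ∀ i, P.map (X i) = volume.withDensity (fun x => ENNReal.ofReal (v x)))
    (hh : Measurable h) (hh0 : ∀ x, 0 ≤ h x) (hhB : ∀ x, h x ≤ B) (hh1 : (∫ x, h x) = 1) :
    (∫⁻ x : Eu d, ∫⁻ ω, ENNReal.ofReal
        (((N : ℝ)⁻¹ * ∑ i : Fin N,
          (h (x - X i ω) - ∫ z, h (x - z) * v z)) ^ (2 * m)) ∂P)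
      ≤ ENNReal.ofReal ((2 ^ (2*m+1) * (m:ℝ) ^ (2*m)) * (N : ℝ) ^ (-(m : ℝ)) * B ^ (2*m - 1)) := by
  classical
  haveI := hP
  have hB0 : 0 ≤ B := (hh0 0).trans (hhB 0)
  have hNpos : (0:ℝ) < N := by exact_mod_cast hN
  -- integrability of v and h
  have hvInt : Integrable v := by
    by_contra hc
    rw [integral_undef hc] at hv1; norm_num at hv1
  have hhInt : Integrable h := by
    by_contra hc
    rw [integral_undef hc] at hh1; norm_num at hh1
  set c : Eu d → ℝ := fun x => ∫ z, h (x - z) * v z with hcdef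
  have hhtrans : ∀ x : Eu d, Measurable (fun z : Eu d => h (x - z)) :=
    fun x => hh.comp (measurable_const.sub measurable_id)
  have hcInt : ∀ x, Integrable (fun z => h (x - z) * v z) := by
    intro x
    refine Integrable.mono' (hvInt.const_mul B) ((hhtrans x).mul hv).aestronglyMeasurable
      (ae_of_all _ fun z => ?_)
    rw [Real.norm_eq_abs, abs_of_nonneg (mul_nonneg (hh0 _) (hv0 _))]
    exact mul_le_mul_of_nonneg_right (hhB _) (hv0 _)
  have hc0 : ∀ x, 0 ≤ c x := fun x =>
    integral_nonneg (fun z => mul_nonneg (hh0 _) (hv0 _))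
  have hcB : ∀ x, c x ≤ B := by
    intro x
    have h1 : c x ≤ ∫ z, B * v z := by
      refine integral_mono (hcInt x) (hvInt.const_mul B) (fun z => ?_)
      exact mul_le_mul_of_nonneg_right (hhB _) (hv0 _)
    calc c x ≤ ∫ z, B * v z := h1
      _ = B := by rw [integral_const_mul, hv1, mul_one]
  -- expectation of h (x - X i)
  have hEh : ∀ (x : Eu d) (i : Fin N), ∫ ω, h (x - X i ω) ∂P = c x := by
    intro x i
    have h1 : ∫ ω, h (x - X i ω) ∂P = ∫ y, h (x - y) ∂(P.map (X i)) :=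
      (integral_map (hX i).aemeasurable (hhtrans x).aestronglyMeasurable).symm
    rw [h1, hmap i]
    have h2 : (fun y : Eu d => ENNReal.ofReal (v y))
        = fun y => ((v y).toNNReal : ℝ≥0∞) := rfl
    rw [h2, integral_withDensity_eq_integral_smul hv.real_toNNReal]
    rw [hcdef]
    congr 1
    funext z
    rw [NNReal.smul_def, smul_eq_mul, Real.coe_toNNReal _ (hv0 z), mul_comm]
  -- integrability of ω ↦ h (x - X i ω)
  have hIntHi : ∀ (x : Eu d) (i : Fin N), Integrable (fun ω => h (x - X i ω)) P := by
    intro x i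
    refine Integrable.mono' (integrable_const B)
      ((hh.comp (measurable_const.sub (hX i))).aestronglyMeasurable)
      (ae_of_all _ fun ω => ?_)
    rw [Real.norm_eq_abs, abs_of_nonneg (hh0 _)]
    exact hhB _
  -- the pointwise key estimate
  set K : ℝ := ((N:ℝ)⁻¹)^(2*m) * ((m:ℝ)^(2*m) * (N:ℝ)^m) * ((2*B)^(2*m-1) * 2) with hKdef
  have hK0 : 0 ≤ K := by positivity
  have key : ∀ x : Eu d,
      (∫⁻ ω, ENNReal.ofReal
        (((N : ℝ)⁻¹ * ∑ i : Fin N, (h (x - X i ω) - c x)) ^ (2 * m)) ∂P)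
      ≤ ENNReal.ofReal (K * c x) := by
    intro x
    set g : Fin N → Ω → ℝ := fun i ω => h (x - X i ω) - c x with hgdef
    have hgmeas : ∀ i, Measurable (g i) :=
      fun i => (hh.comp (measurable_const.sub (hX i))).sub measurable_const
    have hgbd : ∀ i ω, |g i ω| ≤ 2*B := by
      intro i ω
      rw [abs_le]
      constructor <;> simp only [hgdef] <;>
        [nlinarith [hh0 (x - X i ω), hcB x, hc0 x, hhB (x - X i ω)];
         nlinarith [hh0 (x - X i ω), hcB x, hc0 x, hhB (x - X i ω)]]
    have hgind : ProbabilityTheory.iIndepFun g P := by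
      have := hind.comp (fun _ (y : Eu d) => h (x - y) - c x)
        (fun _ => (hh.comp (measurable_const.sub measurable_id)).sub measurable_const)
      exact this
    have hgInt : ∀ i, Integrable (g i) P := by
      intro i
      refine Integrable.mono' (integrable_const (2*B)) (hgmeas i).aestronglyMeasurable
        (ae_of_all _ fun ω => ?_)
      rw [Real.norm_eq_abs]; exact hgbd i ω
    have hEg : ∀ i, ∫ ω, g i ω ∂P = 0 := by
      intro i
      simp only [hgdef]
      rw [integral_sub (hIntHi x i) (integrable_const _), hEh x i, integral_const]
      simp
    -- product terms
    have hFmeas : ∀ p : Fin (2*m) → Fin N, Measurable (fun ω => ∏ j, g (p j) ω) :=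
      fun p => Finset.measurable_prod _ (fun j _ => hgmeas (p j))
    have hFbd : ∀ (p : Fin (2*m) → Fin N) (ω), |∏ j, g (p j) ω| ≤ (2*B)^(2*m) := by
      intro p ω
      rw [Finset.abs_prod]
      calc ∏ j, |g (p j) ω| ≤ ∏ _j : Fin (2*m), (2*B) :=
            Finset.prod_le_prod (fun j _ => abs_nonneg _) (fun j _ => hgbd _ _)
        _ = (2*B)^(2*m) := by rw [Finset.prod_const]; simp
    have hFInt : ∀ p : Fin (2*m) → Fin N, Integrable (fun ω => ∏ j, g (p j) ω) P := by
      intro p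
      refine Integrable.mono' (integrable_const ((2*B)^(2*m)))
        (hFmeas p).aestronglyMeasurable (ae_of_all _ fun ω => ?_)
      rw [Real.norm_eq_abs]; exact hFbd p ω
    -- expansion
    have hexp : ∀ ω, (∑ i, g i ω)^(2*m) = ∑ p : Fin (2*m) → Fin N, ∏ j, g (p j) ω := by
      intro ω
      rw [Finset.sum_pow', Fintype.piFinset_univ]
    have hEexp : ∫ ω, (∑ i, g i ω)^(2*m) ∂P
        = ∑ p : Fin (2*m) → Fin N, ∫ ω, ∏ j, g (p j) ω ∂P := by
      simp_rw [hexp]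
      exact integral_finset_sum _ (fun p _ => hFInt p)
    -- bad terms vanish
    have hbad : ∀ p : Fin (2*m) → Fin N,
        (∃ i, (Finset.univ.filter (fun j => p j = i)).card = 1) →
        ∫ ω, ∏ j, g (p j) ω ∂P = 0 := by
      rintro p ⟨i0, hi0⟩
      have hi0mem : i0 ∈ Finset.univ.image p := by
        have h1 : (Finset.univ.filter (fun j => p j = i0)).Nonempty :=
          Finset.card_pos.mp (by omega)
        rcases h1 with ⟨j, hj⟩
        simp only [Finset.mem_filter] at hj
        exact Finset.mem_image.mpr ⟨j, Finset.mem_univ j, hj.2⟩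
      set G : Fin N → Ω → ℝ :=
        fun i ω => g i ω ^ (Finset.univ.filter (fun j => p j = i)).card with hGdef
      have hGmeas : ∀ i, Measurable (G i) := fun i => (hgmeas i).pow_const _
      have hGind : ProbabilityTheory.iIndepFun G P := by
        have := hgind.comp
          (fun i (y : ℝ) => y ^ (Finset.univ.filter (fun j => p j = i)).card)
          (fun i => measurable_id.pow_const _)
        exact this
      have hGi0 : G i0 = g i0 := by
        funext ω; rw [hGdef]; simp [hi0]
      set Q : Ω → ℝ := fun ω => ∏ i ∈ (Finset.univ.image p).erase i0, G i ω with hQdef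
      have hQmeas : Measurable Q := Finset.measurable_prod _ (fun i _ => hGmeas i)
      have hindep : ProbabilityTheory.IndepFun Q (g i0) P := by
        have h1 := hGind.indepFun_finsetProd_of_notMem hGmeas
          (Finset.notMem_erase i0 (Finset.univ.image p))
        have h2 : (∏ i ∈ (Finset.univ.image p).erase i0, G i) = Q := by
          funext ω; rw [hQdef]; exact Finset.prod_apply ω _ _
        rw [h2, hGi0] at h1
        exact h1
      have hcalc : ∀ ω, ∏ j, g (p j) ω = Q ω * g i0 ω := by
        intro ω
        rw [Finset.prod_comp (fun i => g i ω) p]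
        rw [← Finset.mul_prod_erase _ _ hi0mem, hi0, pow_one, mul_comm, hQdef]
      calc ∫ ω, ∏ j, g (p j) ω ∂P = ∫ ω, Q ω * g i0 ω ∂P :=
            integral_congr_ae (ae_of_all _ hcalc)
        _ = (∫ ω, Q ω ∂P) * ∫ ω, g i0 ω ∂P :=
            hindep.integral_mul_eq_mul_integral hQmeas.aestronglyMeasurable
              (hgmeas i0).aestronglyMeasurable
        _ = 0 := by rw [hEg i0, mul_zero]
    -- good terms bound
    have hgood : ∀ p : Fin (2*m) → Fin N,
        |∫ ω, ∏ j, g (p j) ω ∂P| ≤ (2*B)^(2*m-1) * (2 * c x) := by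
      intro p
      have h2m0 : 0 < 2*m := by omega
      set j0 : Fin (2*m) := ⟨0, h2m0⟩ with hj0
      have h2 : ∀ ω, |∏ j, g (p j) ω| ≤ (2*B)^(2*m-1) * |g (p j0) ω| := by
        intro ω
        rw [Finset.abs_prod]
        rw [← Finset.mul_prod_erase _ _ (Finset.mem_univ j0)]
        have h3 : ∏ j ∈ Finset.univ.erase j0, |g (p j) ω| ≤ (2*B)^(2*m-1) := by
          calc ∏ j ∈ Finset.univ.erase j0, |g (p j) ω|
              ≤ ∏ _j ∈ Finset.univ.erase j0, (2*B) :=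
                Finset.prod_le_prod (fun j _ => abs_nonneg _) (fun j _ => hgbd _ _)
            _ = (2*B)^(2*m-1) := by
                rw [Finset.prod_const, Finset.card_erase_of_mem (Finset.mem_univ j0)]
                simp
        calc |g (p j0) ω| * ∏ j ∈ Finset.univ.erase j0, |g (p j) ω|
            ≤ |g (p j0) ω| * (2*B)^(2*m-1) :=
              mul_le_mul_of_nonneg_left h3 (abs_nonneg _)
          _ = (2*B)^(2*m-1) * |g (p j0) ω| := mul_comm _ _
      have h4 : ∫ ω, |g (p j0) ω| ∂P ≤ 2 * c x := by
        have h5 : ∀ ω, |g (p j0) ω| ≤ h (x - X (p j0) ω) + c x := by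
          intro ω
          rw [abs_le]
          constructor <;> simp only [hgdef] <;>
            nlinarith [hh0 (x - X (p j0) ω), hc0 x]
        calc ∫ ω, |g (p j0) ω| ∂P ≤ ∫ ω, (h (x - X (p j0) ω) + c x) ∂P :=
              integral_mono (hgInt _).abs ((hIntHi x _).add (integrable_const _)) h5
          _ = c x + c x := by
              rw [integral_add (hIntHi x _) (integrable_const _), hEh x, integral_const]
              simp
          _ = 2 * c x := by ring
      have habs : |∫ ω, ∏ j, g (p j) ω ∂P| ≤ ∫ ω, |∏ j, g (p j) ω| ∂P := by
        have := norm_integral_le_integral_norm (μ := P) (fun ω => ∏ j, g (p j) ω)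
        simp only [Real.norm_eq_abs] at this
        exact this
      calc |∫ ω, ∏ j, g (p j) ω ∂P| ≤ ∫ ω, |∏ j, g (p j) ω| ∂P := habs
        _ ≤ ∫ ω, (2*B)^(2*m-1) * |g (p j0) ω| ∂P :=
            integral_mono (hFInt p).abs (((hgInt _).abs).const_mul _) h2
        _ = (2*B)^(2*m-1) * ∫ ω, |g (p j0) ω| ∂P := integral_const_mul _ _
        _ ≤ (2*B)^(2*m-1) * (2 * c x) :=
            mul_le_mul_of_nonneg_left h4 (by positivity)
    -- sum over good terms
    set T : Finset (Fin (2*m) → Fin N) := Finset.univ.filter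
      (fun p => ∀ i : Fin N, (Finset.univ.filter (fun j => p j = i)).card ≠ 1) with hTdef
    have hsplit : ∑ p : Fin (2*m) → Fin N, ∫ ω, ∏ j, g (p j) ω ∂P
        = ∑ p ∈ T, ∫ ω, ∏ j, g (p j) ω ∂P := by
      refine (Finset.sum_subset (Finset.subset_univ T) ?_).symm
      intro p _ hpT
      apply hbad p
      simp only [hTdef, Finset.mem_filter, Finset.mem_univ, true_and, not_forall,
        not_not] at hpT
      exact hpT
    have hTcard : (T.card : ℝ) ≤ (m:ℝ)^(2*m) * (N:ℝ)^m := by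
      have := count_aux m N hm T (by
        intro p hp
        simp only [hTdef, Finset.mem_filter, Finset.mem_univ, true_and] at hp
        exact hp)
      calc (T.card : ℝ) ≤ ((m ^ (2*m) * N ^ m : ℕ) : ℝ) := by exact_mod_cast this
        _ = (m:ℝ)^(2*m) * (N:ℝ)^m := by push_cast; ring
    have hsum : ∫ ω, (∑ i, g i ω)^(2*m) ∂P
        ≤ ((m:ℝ)^(2*m) * (N:ℝ)^m) * ((2*B)^(2*m-1) * (2 * c x)) := by
      rw [hEexp, hsplit]
      calc ∑ p ∈ T, ∫ ω, ∏ j, g (p j) ω ∂P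
          ≤ ∑ p ∈ T, |∫ ω, ∏ j, g (p j) ω ∂P| :=
            Finset.sum_le_sum (fun p _ => le_abs_self _)
        _ ≤ ∑ _p ∈ T, (2*B)^(2*m-1) * (2 * c x) :=
            Finset.sum_le_sum (fun p _ => hgood p)
        _ = (T.card : ℝ) * ((2*B)^(2*m-1) * (2 * c x)) := by
            rw [Finset.sum_const, nsmul_eq_mul]
        _ ≤ ((m:ℝ)^(2*m) * (N:ℝ)^m) * ((2*B)^(2*m-1) * (2 * c x)) := by
            apply mul_le_mul_of_nonneg_right hTcard
            have := hc0 x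
            positivity
    -- full integral bound
    have hSmeas : Measurable (fun ω => ((N:ℝ)⁻¹ * ∑ i, g i ω)^(2*m)) :=
      ((measurable_const.mul (Finset.measurable_sum _ (fun i _ => hgmeas i))).pow_const _)
    have hSbd : ∀ ω, |((N:ℝ)⁻¹ * ∑ i, g i ω)^(2*m)| ≤ (2*B)^(2*m) := by
      intro ω
      rw [abs_pow]
      apply pow_le_pow_left₀ (abs_nonneg _)
      rw [abs_mul, abs_inv, Nat.abs_cast]
      have hsumbd : |∑ i, g i ω| ≤ (N:ℝ) * (2*B) := by
        calc |∑ i, g i ω| ≤ ∑ i, |g i ω| := Finset.abs_sum_le_sum_abs _ _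
          _ ≤ ∑ _i : Fin N, (2*B) := Finset.sum_le_sum (fun i _ => hgbd _ _)
          _ = (N:ℝ) * (2*B) := by rw [Finset.sum_const]; simp [mul_comm]
      calc (N:ℝ)⁻¹ * |∑ i, g i ω| ≤ (N:ℝ)⁻¹ * ((N:ℝ) * (2*B)) :=
            mul_le_mul_of_nonneg_left hsumbd (by positivity)
        _ = 2*B := inv_mul_cancel_left₀ (ne_of_gt hNpos) _
    have hSInt : Integrable (fun ω => ((N:ℝ)⁻¹ * ∑ i, g i ω)^(2*m)) P := by
      refine Integrable.mono' (integrable_const ((2*B)^(2*m)))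
        hSmeas.aestronglyMeasurable (ae_of_all _ fun ω => ?_)
      rw [Real.norm_eq_abs]; exact hSbd ω
    have hfin : ∫ ω, ((N:ℝ)⁻¹ * ∑ i, g i ω)^(2*m) ∂P ≤ K * c x := by
      have hmp : ∀ ω, ((N:ℝ)⁻¹ * ∑ i, g i ω)^(2*m)
          = ((N:ℝ)⁻¹)^(2*m) * (∑ i, g i ω)^(2*m) := fun ω => mul_pow _ _ _
      simp_rw [hmp]
      rw [integral_const_mul]
      calc ((N:ℝ)⁻¹)^(2*m) * ∫ ω, (∑ i, g i ω)^(2*m) ∂P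
          ≤ ((N:ℝ)⁻¹)^(2*m) * (((m:ℝ)^(2*m) * (N:ℝ)^m) * ((2*B)^(2*m-1) * (2 * c x))) :=
            mul_le_mul_of_nonneg_left hsum (by positivity)
        _ = K * c x := by rw [hKdef]; ring
    have hnn : 0 ≤ᵐ[P] fun ω => ((N:ℝ)⁻¹ * ∑ i, g i ω)^(2*m) :=
      ae_of_all _ (fun ω => Even.pow_nonneg (even_two_mul m) _)
    calc (∫⁻ ω, ENNReal.ofReal
          (((N : ℝ)⁻¹ * ∑ i : Fin N, (h (x - X i ω) - c x)) ^ (2 * m)) ∂P)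
        = ENNReal.ofReal (∫ ω, ((N:ℝ)⁻¹ * ∑ i, g i ω)^(2*m) ∂P) :=
          (ofReal_integral_eq_lintegral_ofReal hSInt hnn).symm
      _ ≤ ENNReal.ofReal (K * c x) := ENNReal.ofReal_le_ofReal hfin
  -- integrate the key estimate in x
  have hcx1 : ∫⁻ x, ENNReal.ofReal (c x) = 1 := by
    have hstep : ∀ x, ENNReal.ofReal (c x) = ∫⁻ z, ENNReal.ofReal (h (x - z) * v z) :=
      fun x => ofReal_integral_eq_lintegral_ofReal (hcInt x)
        (ae_of_all _ fun z => mul_nonneg (hh0 _) (hv0 _))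
    simp_rw [hstep]
    have hmeas2 : Measurable (fun q : Eu d × Eu d => ENNReal.ofReal (h (q.1 - q.2) * v q.2)) :=
      ((hh.comp (measurable_fst.sub measurable_snd)).mul (hv.comp measurable_snd)).ennreal_ofReal
    rw [lintegral_lintegral_swap hmeas2.aemeasurable]
    have hz : ∀ z : Eu d, ∫⁻ x, ENNReal.ofReal (h (x - z) * v z) = ENNReal.ofReal (v z) := by
      intro z
      have h6 : ∀ x : Eu d, ENNReal.ofReal (h (x-z) * v z)
          = ENNReal.ofReal (h (x-z)) * ENNReal.ofReal (v z) :=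
        fun x => ENNReal.ofReal_mul (hh0 _)
      simp_rw [h6]
      have hmz : Measurable fun x : Eu d => ENNReal.ofReal (h (x - z)) :=
        (hh.comp (measurable_id.sub measurable_const)).ennreal_ofReal
      rw [lintegral_mul_const _ hmz]
      have h7 : ∫⁻ x : Eu d, ENNReal.ofReal (h (x - z)) = ∫⁻ x, ENNReal.ofReal (h x) :=
        (measurePreserving_sub_right volume z).lintegral_comp hh.ennreal_ofReal
      rw [h7, ← ofReal_integral_eq_lintegral_ofReal hhInt (ae_of_all _ hh0), hh1]
      simp
    simp_rw [hz]
    rw [← ofReal_integral_eq_lintegral_ofReal hvInt (ae_of_all _ hv0), hv1, ENNReal.ofReal_one]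
  have hKle : K ≤ (2 ^ (2*m+1) * (m:ℝ) ^ (2*m)) * (N : ℝ) ^ (-(m : ℝ)) * B ^ (2*m - 1) := by
    have hrw : (N:ℝ)^(-(m:ℝ)) = ((N:ℝ)^m)⁻¹ := by
      rw [← Real.rpow_natCast (N:ℝ) m, ← Real.rpow_neg (le_of_lt hNpos)]
    have h2B : (2*B)^(2*m-1) = 2^(2*m-1) * B^(2*m-1) := mul_pow _ _ _
    have hNinv : ((N:ℝ)⁻¹)^(2*m) * (N:ℝ)^m = ((N:ℝ)^m)⁻¹ := by
      rw [inv_pow, two_mul, pow_add]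
      field_simp
    have h2pow : (2:ℝ)^(2*m-1) * 2 = 2^(2*m) := by
      rw [← pow_succ]
      congr 1
      omega
    calc K = (((N:ℝ)⁻¹)^(2*m) * (N:ℝ)^m) * ((m:ℝ)^(2*m) * ((2:ℝ)^(2*m-1) * 2) * B^(2*m-1)) := by
          rw [hKdef, h2B]; ring
      _ = ((N:ℝ)^m)⁻¹ * ((m:ℝ)^(2*m) * (2:ℝ)^(2*m) * B^(2*m-1)) := by rw [hNinv, h2pow]
      _ ≤ ((N:ℝ)^m)⁻¹ * ((m:ℝ)^(2*m) * (2:ℝ)^(2*m+1) * B^(2*m-1)) := by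
          apply mul_le_mul_of_nonneg_left _ (by positivity)
          apply mul_le_mul_of_nonneg_right _ (by positivity)
          apply mul_le_mul_of_nonneg_left _ (by positivity)
          exact pow_le_pow_right₀ (by norm_num) (by omega)
      _ = (2 ^ (2*m+1) * (m:ℝ) ^ (2*m)) * (N : ℝ) ^ (-(m : ℝ)) * B ^ (2*m - 1) := by
          rw [hrw]; ring
  calc (∫⁻ x : Eu d, ∫⁻ ω, ENNReal.ofReal
        (((N : ℝ)⁻¹ * ∑ i : Fin N,
          (h (x - X i ω) - ∫ z, h (x - z) * v z)) ^ (2 * m)) ∂P)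
      ≤ ∫⁻ x, ENNReal.ofReal (K * c x) := lintegral_mono key
    _ = ∫⁻ x, ENNReal.ofReal K * ENNReal.ofReal (c x) :=
        lintegral_congr (fun x => by rw [ENNReal.ofReal_mul hK0])
    _ = ENNReal.ofReal K * ∫⁻ x, ENNReal.ofReal (c x) :=
        lintegral_const_mul' _ _ ENNReal.ofReal_ne_top
    _ = ENNReal.ofReal K := by rw [hcx1, mul_one]
    _ ≤ _ := ENNReal.ofReal_le_ofReal hKle

/-- moment estimate of order `N^{-m}` for empirical fluctuations of
i.i.d. random variables with density `v` against a bounded probability kernel `h`. -/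
theorem stmt16 (d : ℕ) (hd : 1 ≤ d) (m : ℕ) (hm : 1 ≤ m) :
    ∃ C : ℝ, 0 < C ∧
      ∀ (N : ℕ), 1 ≤ N →
      ∀ (Ω : Type) (mΩ : MeasurableSpace Ω) (P : Measure Ω), IsProbabilityMeasure P →
      ∀ (X : Fin N → Ω → Eu d) (v h : Eu d → ℝ),
        (∀ i, Measurable (X i)) →
        ProbabilityTheory.iIndepFun X P →
        Measurable v → (∀ x, 0 ≤ v x) → (∫ x, v x) = 1 →
        (∀ i, P.map (X i) = volume.withDensity (fun x => ENNReal.ofReal (v x))) →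
        Measurable h → (∀ x, 0 ≤ h x) → (∃ B : ℝ, ∀ x, h x ≤ B) → (∫ x, h x) = 1 →
        (∫⁻ x : Eu d, ∫⁻ ω, ENNReal.ofReal
            (((N : ℝ)⁻¹ * ∑ i : Fin N,
              (h (x - X i ω) - ∫ z, h (x - z) * v z)) ^ (2 * m)) ∂P)
          ≤ ENNReal.ofReal (C * (N : ℝ) ^ (-(m : ℝ)) *
              (eLpNorm h ⊤ volume).toReal ^ (2 * m - 1)) := by
  classical
  have hmR : (0:ℝ) < m := by exact_mod_cast hm
  refine ⟨2 ^ (2*m+1) * (m:ℝ) ^ (2*m), by positivity, ?_⟩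
  intro N hN Ω mΩ P hP X v h hX hind hv hv0 hv1 hmap hh hh0 hBd hh1
  haveI := hP
  obtain ⟨B1, hB1⟩ := hBd
  set B : ℝ := (eLpNorm h ⊤ volume).toReal with hBdef
  have hB0 : 0 ≤ B := ENNReal.toReal_nonneg
  -- finiteness of the essential sup
  have hfin : eLpNorm h ⊤ volume ≠ ⊤ := by
    have hle := eLpNorm_le_of_ae_bound (μ := volume) (p := (⊤ : ℝ≥0∞)) (f := h) (C := B1)
      (ae_of_all _ fun y => by
        rw [Real.norm_eq_abs, abs_of_nonneg (hh0 y)]; exact hB1 y)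
    refine ne_top_of_le_ne_top ?_ hle
    simp [ENNReal.toReal_top]
  -- a.e. bound by B
  have haeB : ∀ᵐ y : Eu d ∂volume, h y ≤ B := by
    have h1 : ∀ᵐ y : Eu d ∂volume, (‖h y‖₊ : ℝ≥0∞) ≤ eLpNormEssSup h volume :=
      ae_le_eLpNormEssSup
    filter_upwards [h1] with y hy
    have h2 : ((‖h y‖₊ : ℝ≥0∞)).toReal ≤ (eLpNormEssSup h volume).toReal :=
      ENNReal.toReal_mono (by rwa [← eLpNorm_exponent_top]) hy
    rw [ENNReal.coe_toReal, coe_nnnorm, Real.norm_eq_abs, abs_of_nonneg (hh0 y)] at h2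
    rw [hBdef, eLpNorm_exponent_top]
    exact h2
  -- truncated kernel
  set h' : Eu d → ℝ := fun y => min (h y) B with h'def
  have hh'meas : Measurable h' := hh.min measurable_const
  have hh'0 : ∀ y, 0 ≤ h' y := fun y => le_min (hh0 y) hB0
  have hh'B : ∀ y, h' y ≤ B := fun y => min_le_right _ _
  have hh'ae : h' =ᵐ[volume] h := by
    filter_upwards [haeB] with y hy
    rw [h'def]
    exact min_eq_left hy
  have hh'1 : (∫ x, h' x) = 1 := by
    rw [integral_congr_ae hh'ae]; exact hh1
  -- the convolution with v is unchanged
  have hceq : ∀ x : Eu d, (∫ z, h' (x - z) * v z) = ∫ z, h (x - z) * v z := by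
    intro x
    apply integral_congr_ae
    have hmp : MeasurePreserving (fun z : Eu d => x - z) volume volume := by
      have hneg : MeasurePreserving (fun z : Eu d => -z) volume volume :=
        Measure.measurePreserving_neg volume
      have hadd : MeasurePreserving (fun z : Eu d => x + z) volume volume :=
        measurePreserving_add_left volume x
      have := hadd.comp hneg
      simpa [Function.comp_def, sub_eq_add_neg] using this
    have hcomp : (fun z : Eu d => h' (x - z)) =ᵐ[volume] fun z => h (x - z) :=
      hmp.quasiMeasurePreserving.ae_eq_comp hh'ae
    exact hcomp.mul (Filter.EventuallyEq.refl _ _)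
  -- a.e. (in ω) equality of the empirical sums, for every x
  have hnullset : volume {y : Eu d | ¬ h' y = h y} = 0 := hh'ae
  have hXae : ∀ (x : Eu d) (i : Fin N), ∀ᵐ ω ∂P, h (x - X i ω) = h' (x - X i ω) := by
    intro x i
    have habs : P.map (X i) ≪ volume := by
      rw [hmap i]; exact withDensity_absolutelyContinuous _ _
    have h1 : ∀ᵐ y : Eu d ∂volume, h (x - y) = h' (x - y) := by
      have hmp : MeasurePreserving (fun z : Eu d => x - z) volume volume := by
        have hneg : MeasurePreserving (fun z : Eu d => -z) volume volume :=
          Measure.measurePreserving_neg volume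
        have hadd : MeasurePreserving (fun z : Eu d => x + z) volume volume :=
          measurePreserving_add_left volume x
        have := hadd.comp hneg
        simpa [Function.comp_def, sub_eq_add_neg] using this
      exact hmp.quasiMeasurePreserving.ae_eq_comp hh'ae.symm
    have h2 : ∀ᵐ y ∂(P.map (X i)), h (x - y) = h' (x - y) := habs.ae_le h1
    exact ae_of_ae_map (hX i).aemeasurable h2
  -- rewrite the LHS using h'
  have hxeq : ∀ x : Eu d,
      (∫⁻ ω, ENNReal.ofReal
        (((N : ℝ)⁻¹ * ∑ i : Fin N,
          (h (x - X i ω) - ∫ z, h (x - z) * v z)) ^ (2 * m)) ∂P)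
      = ∫⁻ ω, ENNReal.ofReal
        (((N : ℝ)⁻¹ * ∑ i : Fin N,
          (h' (x - X i ω) - ∫ z, h' (x - z) * v z)) ^ (2 * m)) ∂P := by
    intro x
    apply lintegral_congr_ae
    filter_upwards [ae_all_iff.mpr (hXae x)] with ω hω
    congr 1
    rw [hceq x]
    congr 1
    congr 1
    exact Finset.sum_congr rfl (fun i _ => by rw [hω i])
  calc (∫⁻ x : Eu d, ∫⁻ ω, ENNReal.ofReal
        (((N : ℝ)⁻¹ * ∑ i : Fin N,
          (h (x - X i ω) - ∫ z, h (x - z) * v z)) ^ (2 * m)) ∂P)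
      = ∫⁻ x : Eu d, ∫⁻ ω, ENNReal.ofReal
        (((N : ℝ)⁻¹ * ∑ i : Fin N,
          (h' (x - X i ω) - ∫ z, h' (x - z) * v z)) ^ (2 * m)) ∂P :=
        lintegral_congr hxeq
    _ ≤ ENNReal.ofReal ((2 ^ (2*m+1) * (m:ℝ) ^ (2*m)) * (N : ℝ) ^ (-(m : ℝ)) * B ^ (2*m - 1)) :=
        mainLem d m hm N hN Ω mΩ P hP X v h' B hX hind hv hv0 hv1 hmap
          hh'meas hh'0 hh'B hh'1
    _ = _ := rfl

end
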